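/- Suppose v_1, ..., v_{2g+1} and w_1, ..., w_{2g+1} are two families of nonzero vectors in (Z/2Z)^{2g} each satisfying (x_i, x_j) = 1 for all i ≠ j. Then there is a linear automorphism A of (Z/2Z)^{2g} preserving the symplectic pairing with A v_i = w_i for all i. -/

import Mathlib

def sympPair (g : ℕ) (x y : Fin (2 * g) → ZMod 2) : ZMod 2 :=
  ∑ i : Fin g,
    (x ⟨2 * i.val, by have := i.isLt; omega⟩ * y ⟨2 * i.val + 1, by have := i.isLt; omega⟩ +
     x ⟨2 * i.val + 1, by have := i.isLt; omega⟩ * y ⟨2 * i.val, by have := i.isLt; omega⟩)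

lemma sympPair_add_left (g : ℕ) (x x' y : Fin (2 * g) → ZMod 2) :
    sympPair g (x + x') y = sympPair g x y + sympPair g x' y := by
  unfold sympPair
  rw [← Finset.sum_add_distrib]
  exact Finset.sum_congr rfl fun i _ => by simp only [Pi.add_apply]; ring

lemma sympPair_smul_left (g : ℕ) (c : ZMod 2) (x y : Fin (2 * g) → ZMod 2) :
    sympPair g (c • x) y = c * sympPair g x y := by
  unfold sympPair
  rw [Finset.mul_sum]
  exact Finset.sum_congr rfl fun i _ => by simp only [Pi.smul_apply, smul_eq_mul]; ring

lemma sympPair_comm (g : ℕ) (x y : Fin (2 * g) → ZMod 2) :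
    sympPair g x y = sympPair g y x :=
  Finset.sum_congr rfl fun i _ => by ring

lemma sympPair_self (g : ℕ) (x : Fin (2 * g) → ZMod 2) :
    sympPair g x x = 0 :=
  Finset.sum_eq_zero fun i _ => by rw [mul_comm]; exact CharTwo.add_self_eq_zero _

def sympForm (g : ℕ) :
    (Fin (2 * g) → ZMod 2) →ₗ[ZMod 2] (Fin (2 * g) → ZMod 2) →ₗ[ZMod 2] ZMod 2 :=
  LinearMap.mk₂ (ZMod 2) (sympPair g)
    (sympPair_add_left g)
    (fun c x y => by rw [sympPair_smul_left, smul_eq_mul])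
    (fun x y y' => by rw [sympPair_comm, sympPair_add_left, sympPair_comm g y x, sympPair_comm g y' x])
    (fun c x y => by rw [sympPair_comm, sympPair_smul_left, sympPair_comm g y x, smul_eq_mul])

@[simp] lemma sympForm_apply (g : ℕ) (x y : Fin (2 * g) → ZMod 2) :
    sympForm g x y = sympPair g x y := rfl

lemma sympPair_sum_left (g : ℕ) (c : Fin (2 * g) → ZMod 2)
    (u : Fin (2 * g) → Fin (2 * g) → ZMod 2) (x : Fin (2 * g) → ZMod 2) :
    sympPair g (∑ i, c i • u i) x = ∑ i, c i * sympPair g (u i) x := by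
  rw [← sympForm_apply, map_sum, LinearMap.sum_apply]
  exact Finset.sum_congr rfl fun i _ => by
    rw [map_smul, LinearMap.smul_apply, smul_eq_mul, sympForm_apply]

noncomputable def basisOf {g : ℕ} {b : Fin (2 * g) → Fin (2 * g) → ZMod 2}
    (li : LinearIndependent (ZMod 2) b) : Module.Basis (Fin (2 * g)) (ZMod 2) (Fin (2 * g) → ZMod 2) :=
  Module.Basis.mk li (li.span_eq_top_of_card_eq_finrank' (by simp)).ge

@[simp] lemma basisOf_apply {g : ℕ} {b : Fin (2 * g) → Fin (2 * g) → ZMod 2}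
    (li : LinearIndependent (ZMod 2) b) (i : Fin (2 * g)) : basisOf li i = b i := by
  simp [basisOf]

section Aux
variable (g : ℕ) (v : Fin (2 * g + 1) → Fin (2 * g) → ZMod 2)
  (hp : ∀ i j, i ≠ j → sympPair g (v i) (v j) = 1)

include hp

lemma aux_li : LinearIndependent (ZMod 2) (fun i : Fin (2 * g) => v i.castSucc) := by
  rw [Fintype.linearIndependent_iff]
  intro c hc
  -- pairing with v (last) gives sum of c = 0
  have hlast : ∀ i : Fin (2 * g), i.castSucc ≠ Fin.last (2 * g) := fun i =>
    Fin.castSucc_lt_last i |>.ne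
  have hs : (∑ i, c i) = 0 := by
    have := congrArg (fun z => sympPair g z (v (Fin.last (2 * g)))) hc
    simp only [sympPair_sum_left] at this
    rw [Finset.sum_congr rfl (fun i _ => by rw [hp _ _ (hlast i), mul_one])] at this
    simpa [sympPair] using this
  intro j
  have := congrArg (fun z => sympPair g z (v j.castSucc)) hc
  simp only [sympPair_sum_left] at this
  have h2 : ∀ i ∈ Finset.univ, i ≠ j →
      c i * sympPair g (v i.castSucc) (v j.castSucc) = c i := fun i _ hij => by
    rw [hp _ _ (by simpa using hij), mul_one]
  rw [← Finset.add_sum_erase _ _ (Finset.mem_univ j), sympPair_self, mul_zero, zero_add,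
    Finset.sum_congr rfl (fun i hi => h2 i (Finset.mem_univ i) (Finset.ne_of_mem_erase hi))]
    at this
  have h3 : (∑ i, c i) - c j = 0 := by
    simpa [sympPair, Finset.sum_erase_eq_sub] using this
  rw [hs, zero_sub] at h3
  exact neg_eq_zero.mp h3

lemma pair_comb (c : Fin (2 * g) → ZMod 2) (j : Fin (2 * g)) :
    sympPair g (∑ i, c i • v i.castSucc) (v j.castSucc) = (∑ i, c i) - c j := by
  rw [sympPair_sum_left, ← Finset.add_sum_erase _ _ (Finset.mem_univ j), sympPair_self, mul_zero,
    zero_add,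
    Finset.sum_congr rfl (fun i hi => by
      rw [hp _ _ (by simpa using Finset.ne_of_mem_erase hi), mul_one]),
    Finset.sum_erase_eq_sub (Finset.mem_univ j)]

lemma aux_sum : v (Fin.last (2 * g)) = ∑ i : Fin (2 * g), v i.castSucc := by
  have li := aux_li g v hp
  let B := basisOf li
  have hB : ∀ i, B i = v i.castSucc := fun i => by simp [B]
  set c : Fin (2 * g) → ZMod 2 := fun i => B.repr (v (Fin.last (2 * g))) i with hc
  have hrepr : ∑ i, c i • v i.castSucc = v (Fin.last (2 * g)) := by
    conv_lhs => rw [Finset.sum_congr rfl (fun i _ => by rw [← hB i])]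
    exact B.sum_repr _
  have hlast : ∀ i : Fin (2 * g), i.castSucc ≠ Fin.last (2 * g) := fun i =>
    (Fin.castSucc_lt_last i).ne
  have h1 : ∀ j, (∑ i, c i) - c j = 1 := fun j => by
    rw [← pair_comb g v hp c j, hrepr]
    exact hp _ _ (Ne.symm (hlast j))
  have heven : ∀ x : ZMod 2, (2 * g) • x = 0 := fun x => by
    rw [mul_comm, mul_smul, two_smul, CharTwo.add_self_eq_zero, smul_zero]
  have hs : (∑ i, c i) = 0 := by
    have := Finset.sum_congr rfl (fun j (_ : j ∈ Finset.univ) => h1 j)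
    rw [Finset.sum_sub_distrib, Finset.sum_const, Finset.sum_const, Finset.card_univ,
      Fintype.card_fin, heven, heven, zero_sub, neg_eq_zero] at this
    exact this
  have hcj : ∀ j, c j = 1 := fun j => by
    have := h1 j
    rw [hs, zero_sub] at this
    rw [← neg_neg (c j), this]
    decide
  rw [← hrepr]
  exact Finset.sum_congr rfl fun i _ => by rw [hcj, one_smul]

end Aux

theorem stmt4 (g : ℕ) (v w : Fin (2 * g + 1) → Fin (2 * g) → ZMod 2)
    (hvnz : ∀ i, v i ≠ 0) (hwnz : ∀ i, w i ≠ 0)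
    (hvpair : ∀ i j, i ≠ j → sympPair g (v i) (v j) = 1)
    (hwpair : ∀ i j, i ≠ j → sympPair g (w i) (w j) = 1) :
    ∃ A : (Fin (2 * g) → ZMod 2) ≃ₗ[ZMod 2] (Fin (2 * g) → ZMod 2),
      (∀ x y, sympPair g (A x) (A y) = sympPair g x y) ∧ ∀ i, A (v i) = w i := by
  have liv := aux_li g v hvpair
  have liw := aux_li g w hwpair
  have hsv := aux_sum g v hvpair
  have hsw := aux_sum g w hwpair
  let Bv := basisOf liv
  let Bw := basisOf liw
  have hBv : ∀ i, Bv i = v i.castSucc := fun i => by simp [Bv]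
  have hBw : ∀ i, Bw i = w i.castSucc := fun i => by simp [Bw]
  set A := Bv.equiv Bw (Equiv.refl _) with hA
  have hAi : ∀ i : Fin (2 * g), A (v i.castSucc) = w i.castSucc := fun i => by
    rw [← hBv, ← hBw, hA, Module.Basis.equiv_apply, Equiv.refl_apply]
  refine ⟨A, ?_, ?_⟩
  · suffices h : ((sympForm g).compl₁₂ (A : (Fin (2*g) → ZMod 2) →ₗ[ZMod 2] (Fin (2*g) → ZMod 2))
        (A : (Fin (2*g) → ZMod 2) →ₗ[ZMod 2] (Fin (2*g) → ZMod 2))) = sympForm g by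
      intro x y
      have := LinearMap.congr_fun (LinearMap.congr_fun h x) y
      simpa using this
    apply Module.Basis.ext Bv
    intro i
    apply Module.Basis.ext Bv
    intro j
    rw [LinearMap.compl₁₂_apply, LinearEquiv.coe_coe, sympForm_apply, sympForm_apply,
      hBv i, hBv j, hAi, hAi]
    by_cases hij : i = j
    · subst hij
      rw [sympPair_self, sympPair_self]
    · rw [hvpair _ _ (by simpa using hij), hwpair _ _ (by simpa using hij)]
  · intro i
    induction i using Fin.lastCases with
    | last =>
      rw [hsv, hsw, map_sum]
      exact Finset.sum_congr rfl fun i _ => hAi i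
    | cast i => exact hAi i
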